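/- Let n ≥ 7 and let F_n be the graph obtained as follows: take a cycle v_1 v_2 … v_{n-1} v_1 of order n − 1, add all 2-chords v_i v_{i+2} (indices modulo n − 1), and then add a new vertex v_n adjacent exactly to v_1, v_2 and v_3. Then F_n is connected of order n and size 2n + 1, κ(F_n) = 3, and {v_1, v_2, v_3} is the unique minimum vertex cut of F_n; moreover this cut induces a triangle, so F_n has no foresty minimum vertex cut. -/

import Mathlib

open SimpleGraph

/-- `S` is a vertex cut of `G`: a proper subset of the vertex set whose removal
disconnects the graph. -/
def IsVertexCut {V : Type*} [Fintype V] (G : SimpleGraph V) (S : Finset V) : Prop :=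
  (S : Set V) ≠ Set.univ ∧ ¬ (G.induce ((S : Set V)ᶜ)).Connected

/-- The connectivity `κ(G)`: the minimum cardinality of a vertex cut of `G`. -/
noncomputable def graphConnectivity {V : Type*} [Fintype V] (G : SimpleGraph V) : ℕ :=
  sInf {k | ∃ S : Finset V, IsVertexCut G S ∧ S.card = k}

abbrev Fg (n : ℕ) : SimpleGraph (Fin n) := SimpleGraph.fromRel (fun a b =>
        (a.val < n - 1 ∧ b.val < n - 1 ∧ b.val = (a.val + 1) % (n - 1)) ∨
        (a.val < n - 1 ∧ b.val < n - 1 ∧ b.val = (a.val + 2) % (n - 1)) ∨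
        (a.val = n - 1 ∧ b.val < 3))

def cv {n : ℕ} (h : 7 ≤ n) (i : ℕ) : Fin n :=
  ⟨i % (n-1), lt_of_lt_of_le (Nat.mod_lt i (by omega)) (Nat.sub_le n 1)⟩

lemma cv_val {n : ℕ} (h : 7 ≤ n) (i : ℕ) : (cv h i).val = i % (n-1) := rfl

lemma cv_eq_iff {n : ℕ} (h : 7 ≤ n) {i j : ℕ} : cv h i = cv h j ↔ i ≡ j [MOD n-1] := by
  rw [Fin.ext_iff]; exact Iff.rfl

lemma cv_congr {n : ℕ} (h : 7 ≤ n) {i j : ℕ} (hij : i ≡ j [MOD n-1]) : cv h i = cv h j :=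
  (cv_eq_iff h).mpr hij

lemma cv_small {n : ℕ} (h : 7 ≤ n) {i : ℕ} (hi : i < n - 1) : cv h i = ⟨i, by omega⟩ := by
  apply Fin.ext; simp [cv_val, Nat.mod_eq_of_lt hi]

lemma adj_step1 {n : ℕ} (h : 7 ≤ n) (i : ℕ) : (Fg n).Adj (cv h i) (cv h (i+1)) := by
  rw [SimpleGraph.fromRel_adj]
  constructor
  · intro hc
    have := ((cv_eq_iff h).mp hc)
    have h2 := (Nat.modEq_iff_dvd' (Nat.le_succ i)).mp this
    simp at h2
    omega
  · left; left
    refine ⟨Nat.mod_lt i (by omega), Nat.mod_lt _ (by omega), ?_⟩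
    show (i+1) % (n-1) = (i % (n-1) + 1) % (n-1)
    conv_lhs => rw [Nat.add_mod]
    rw [Nat.mod_eq_of_lt (show 1 < n - 1 by omega)]

lemma adj_step2 {n : ℕ} (h : 7 ≤ n) (i : ℕ) : (Fg n).Adj (cv h i) (cv h (i+2)) := by
  rw [SimpleGraph.fromRel_adj]
  constructor
  · intro hc
    have := ((cv_eq_iff h).mp hc)
    have h2 := (Nat.modEq_iff_dvd' (by omega : i ≤ i + 2)).mp this
    have h3 : n - 1 ∣ 2 := by simpa using h2
    have := Nat.le_of_dvd (by norm_num) h3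
    omega
  · left; right; left
    refine ⟨Nat.mod_lt i (by omega), Nat.mod_lt _ (by omega), ?_⟩
    show (i+2) % (n-1) = (i % (n-1) + 2) % (n-1)
    conv_lhs => rw [Nat.add_mod]
    rw [Nat.mod_eq_of_lt (show 2 < n - 1 by omega)]

lemma adj_z {n : ℕ} (h : 7 ≤ n) {t : ℕ} (ht : t < 3) :
    (Fg n).Adj ⟨n-1, by omega⟩ (cv h t) := by
  rw [SimpleGraph.fromRel_adj]
  have hcv : (cv h t).val = t := by rw [cv_val, Nat.mod_eq_of_lt (by omega)]
  constructor
  · intro hc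
    have := congrArg Fin.val hc
    simp [hcv] at this
    omega
  · left; right; right
    exact ⟨rfl, by omega⟩
lemma reach_of_adj {n : ℕ} (S : Finset (Fin n)) {a b : Fin n}
    (hab : (Fg n).Adj a b) (ha : a ∉ S) (hb : b ∉ S) :
    ((Fg n).induce ((S : Set (Fin n))ᶜ)).Reachable ⟨a, by simpa using ha⟩ ⟨b, by simpa using hb⟩ :=
  SimpleGraph.Adj.reachable (by simpa using hab)

lemma reach_congr {n : ℕ} {G : SimpleGraph (Fin n)} {s : Set (Fin n)} {x y x' y' : Fin n}
    {p : x ∈ s} {q : y ∈ s} {p' : x' ∈ s} {q' : y' ∈ s} (hx : x = x') (hy : y = y')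
    (r : (G.induce s).Reachable ⟨x, p⟩ ⟨y, q⟩) : (G.induce s).Reachable ⟨x', p'⟩ ⟨y', q'⟩ := by
  subst hx; subst hy; exact r

lemma walk_lemma {n : ℕ} (h : 7 ≤ n) (S : Finset (Fin n)) :
    ∀ k i (hi : cv h i ∉ S) (hk : cv h (i+k) ∉ S),
    (∀ j, 1 ≤ j → j + 1 ≤ k → cv h (i+j) ∈ S → cv h (i+j+1) ∈ S → False) →
    ((Fg n).induce ((S : Set (Fin n))ᶜ)).Reachable
      ⟨cv h i, by simpa using hi⟩ ⟨cv h (i+k), by simpa using hk⟩ := by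
  intro k
  induction k using Nat.strong_induction_on with
  | _ k IH =>
    intro i hi hk hcond
    match k, hk, hcond with
    | 0, hk, hcond => rfl
    | 1, hk, hcond =>
      exact reach_of_adj S (adj_step1 h i) hi hk
    | (k+2), hk, hcond =>
      by_cases h1 : cv h (i+1) ∈ S
      · have h2 : cv h (i+2) ∉ S := by
          rcases Nat.eq_zero_or_pos k with rfl | hkpos
          · exact hk
          · intro h2'
            exact hcond 1 le_rfl (by omega) h1
              (by rw [show i+1+1 = i+2 from by omega]; exact h2')
        have step : ((Fg n).induce ((S : Set (Fin n))ᶜ)).Reachable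
            ⟨cv h i, by simpa using hi⟩ ⟨cv h (i+2), by simpa using h2⟩ :=
          reach_of_adj S (adj_step2 h i) hi h2
        have rest := IH k (by omega) (i+2) h2
          (by rw [show i+2+k = i+(k+2) from by omega]; exact hk)
          (fun j hj1 hj2 hd1 hd2 => hcond (j+2) (by omega) (by omega)
            (by rw [show i+(j+2) = i+2+j from by omega]; exact hd1)
            (by rw [show i+(j+2)+1 = i+2+j+1 from by omega]; exact hd2))
        exact step.trans (reach_congr rfl (congrArg (cv h) (by omega)) rest)
      · have step : ((Fg n).induce ((S : Set (Fin n))ᶜ)).Reachable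
            ⟨cv h i, by simpa using hi⟩ ⟨cv h (i+1), by simpa using h1⟩ :=
          reach_of_adj S (adj_step1 h i) hi h1
        have rest := IH (k+1) (by omega) (i+1) h1
          (by rw [show i+1+(k+1) = i+(k+2) from by omega]; exact hk)
          (fun j hj1 hj2 hd1 hd2 => hcond (j+1) (by omega) (by omega)
            (by rw [show i+(j+1) = i+1+j from by omega]; exact hd1)
            (by rw [show i+(j+1)+1 = i+1+j+1 from by omega]; exact hd2))
        exact step.trans (reach_congr rfl (congrArg (cv h) (by omega)) rest)
lemma cv_add_ne {n : ℕ} (h : 7 ≤ n) (d : ℕ) {o o' : ℕ} (ho : o < n-1) (ho' : o' < n-1)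
    (hne : o ≠ o') : cv h (d+o) ≠ cv h (d+o') := by
  intro e
  have e2 := (cv_eq_iff h).mp e
  have e3 := Nat.ModEq.add_left_cancel' d e2
  rw [Nat.ModEq, Nat.mod_eq_of_lt ho, Nat.mod_eq_of_lt ho'] at e3
  exact hne e3

lemma keyB {n : ℕ} (h : 7 ≤ n) (S : Finset (Fin n)) (hcard : S.card ≤ 3) (d : ℕ)
    (hd0 : cv h d ∈ S) (hd1 : cv h (d+1) ∈ S) {p q : ℕ} (hp : cv h p ∉ S) (hq : cv h q ∉ S)
    {α β : ℕ} (hαp : cv h (d+2+α) = cv h p) (hβq : cv h (d+2+β) = cv h q)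
    (hβ : β ≤ n-1-3) (hαβ : α ≤ β) :
    ((Fg n).induce ((S : Set (Fin n))ᶜ)).Reachable
      ⟨cv h p, by simpa using hp⟩ ⟨cv h q, by simpa using hq⟩ := by
  have hi : cv h (d+2+α) ∉ S := by rw [hαp]; exact hp
  have hk : cv h (d+2+α+(β-α)) ∉ S := by
    rw [show d+2+α+(β-α) = d+2+β from by omega, hβq]; exact hq
  have cond : ∀ j, 1 ≤ j → j + 1 ≤ β - α → cv h (d+2+α+j) ∈ S → cv h (d+2+α+j+1) ∈ S → False := by
    intro j hj1 hj2 hm1 hm2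
    set γ := 2 + α + j with hγ
    have hγlt : γ + 1 < n - 1 := by omega
    have hm1' : cv h (d+γ) ∈ S := by rw [show d+γ = d+2+α+j from by omega]; exact hm1
    have hm2' : cv h (d+(γ+1)) ∈ S := by rw [show d+(γ+1) = d+2+α+j+1 from by omega]; exact hm2
    have hd0' : cv h (d+0) ∈ S := by simpa using hd0
    have hd1' : cv h (d+1) ∈ S := hd1
    have hT : ({cv h (d+0), cv h (d+1), cv h (d+γ), cv h (d+(γ+1))} : Finset (Fin n)) ⊆ S := by
      simp only [Finset.insert_subset_iff, Finset.singleton_subset_iff]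
      exact ⟨hd0', hd1', hm1', hm2'⟩
    have hT4 : ({cv h (d+0), cv h (d+1), cv h (d+γ), cv h (d+(γ+1))} : Finset (Fin n)).card = 4 := by
      rw [Finset.card_insert_of_notMem, Finset.card_insert_of_notMem,
        Finset.card_insert_of_notMem, Finset.card_singleton]
      · simp only [Finset.mem_singleton]
        exact cv_add_ne h d (by omega) (by omega) (by omega)
      · simp only [Finset.mem_insert, Finset.mem_singleton]
        push_neg
        exact ⟨cv_add_ne h d (by omega) (by omega) (by omega),
               cv_add_ne h d (by omega) (by omega) (by omega)⟩
      · simp only [Finset.mem_insert, Finset.mem_singleton]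
        push_neg
        exact ⟨cv_add_ne h d (by omega) (by omega) (by omega),
               cv_add_ne h d (by omega) (by omega) (by omega),
               cv_add_ne h d (by omega) (by omega) (by omega)⟩
    have := Finset.card_le_card hT
    omega
  have w := walk_lemma h S (β - α) (d+2+α) hi hk cond
  exact reach_congr hαp ((congrArg (cv h) (by omega : d+2+α+(β-α) = d+2+β)).trans hβq) w
lemma cycle_reach {n : ℕ} (h : 7 ≤ n) (S : Finset (Fin n)) (hcard : S.card ≤ 3) {p q : ℕ}
    (hp : cv h p ∉ S) (hq : cv h q ∉ S) :
    ((Fg n).induce ((S : Set (Fin n))ᶜ)).Reachable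
      ⟨cv h p, by simpa using hp⟩ ⟨cv h q, by simpa using hq⟩ := by
  have hmlt : 0 < n - 1 := by omega
  by_cases hB : ∃ d, cv h d ∈ S ∧ cv h (d+1) ∈ S
  · obtain ⟨d, hd0, hd1⟩ := hB
    have off_spec : ∀ x : ℕ, cv h x ∉ S → ∃ α, cv h (d+2+α) = cv h x ∧ α ≤ n-1-3 := by
      intro x hx
      set m := n - 1 with hm
      set α := (x % m + 2*m - (d % m + 2)) % m with hα
      have hdm : d % m < m := Nat.mod_lt d hmlt
      have heq : cv h (d+2+α) = cv h x := by
        apply cv_congr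
        have e1 : α ≡ x % m + 2*m - (d % m + 2) [MOD m] := Nat.mod_modEq _ _
        have e2 : d + 2 ≡ d % m + 2 [MOD m] := Nat.ModEq.add_right 2 (Nat.mod_modEq d m).symm
        have e3 := e2.add e1
        rw [show (d % m + 2) + (x % m + 2*m - (d % m + 2)) = x % m + 2*m from by omega] at e3
        refine e3.trans ?_
        calc x % m + 2*m ≡ x % m [MOD m] := by
              unfold Nat.ModEq; rw [Nat.add_mul_mod_self_right]
          _ ≡ x [MOD m] := Nat.mod_modEq x m
      refine ⟨α, heq, ?_⟩
      have hlt : α < m := Nat.mod_lt _ hmlt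
      by_contra hge
      have : α = m - 2 ∨ α = m - 1 := by omega
      rcases this with he | he
      · apply hx
        rw [← heq, he, show d + 2 + (m - 2) = d + m from by omega]
        have : cv h (d + m) = cv h d := cv_congr h (by unfold Nat.ModEq; rw [Nat.add_mod_right])
        rw [this]; exact hd0
      · apply hx
        rw [← heq, he, show d + 2 + (m - 1) = (d + 1) + m from by omega]
        have : cv h ((d+1) + m) = cv h (d+1) := cv_congr h (by unfold Nat.ModEq; rw [Nat.add_mod_right])
        rw [this]; exact hd1
    obtain ⟨α, hαp, hαb⟩ := off_spec p hp
    obtain ⟨β, hβq, hβb⟩ := off_spec q hq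
    rcases le_total α β with hle | hle
    · exact keyB h S hcard d hd0 hd1 hp hq hαp hβq hβb hle
    · exact (keyB h S hcard d hd0 hd1 hq hp hβq hαp hαb hle).symm
  · push_neg at hB
    set m := n - 1 with hm
    set k := (q % m + m - p % m) % m with hk
    have e : cv h (p + k) = cv h q := by
      apply cv_congr
      have e1 : k ≡ q % m + m - p % m [MOD m] := Nat.mod_modEq _ _
      have e2 := (Nat.mod_modEq p m).symm.add e1
      rw [show p % m + (q % m + m - p % m) = q % m + m from by
        have := Nat.mod_lt p hmlt; omega] at e2
      refine e2.trans ?_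
      calc q % m + m ≡ q % m [MOD m] := by unfold Nat.ModEq; rw [Nat.add_mod_right]
        _ ≡ q [MOD m] := Nat.mod_modEq q m
    have hk' : cv h (p + k) ∉ S := by rw [e]; exact hq
    have w := walk_lemma h S k p hp hk' (fun j _ _ h1 h2 => hB (p+j) h1 h2)
    exact reach_congr rfl e w

lemma connect {n : ℕ} (h : 7 ≤ n) (S : Finset (Fin n)) (hcard : S.card ≤ 3)
    (hns : ¬ (({⟨0, by omega⟩, ⟨1, by omega⟩, ⟨2, by omega⟩} : Finset (Fin n)) ⊆ S)) :
    ((Fg n).induce ((S : Set (Fin n))ᶜ)).Connected := by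
  have hex : ∃ t, t < 3 ∧ cv h t ∉ S := by
    by_contra hc
    push_neg at hc
    apply hns
    intro x hx
    simp only [Finset.mem_insert, Finset.mem_singleton] at hx
    have h0 := hc 0 (by omega)
    have h1 := hc 1 (by omega)
    have h2 := hc 2 (by omega)
    rw [cv_small h (by omega)] at h0 h1 h2
    rcases hx with rfl | rfl | rfl
    · exact h0
    · exact h1
    · exact h2
  obtain ⟨t, ht3, htS⟩ := hex
  have key : ∀ (w : Fin n) (hw : w ∉ S),
      ((Fg n).induce ((S : Set (Fin n))ᶜ)).Reachable
        ⟨w, by simpa using hw⟩ ⟨cv h t, by simpa using htS⟩ := by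
    intro w hw
    by_cases hwv : w.val = n - 1
    · have hwz : w = ⟨n-1, by omega⟩ := Fin.ext hwv
      have hw' : (⟨n-1, by omega⟩ : Fin n) ∉ S := hwz ▸ hw
      have r := reach_of_adj S (adj_z h ht3) hw' htS
      exact reach_congr hwz.symm rfl r
    · have hwlt : w.val < n - 1 := by have := w.isLt; omega
      have hwc : cv h w.val = w := by rw [cv_small h hwlt]
      have hw' : cv h w.val ∉ S := by rw [hwc]; exact hw
      have r := cycle_reach h S hcard hw' htS
      exact reach_congr hwc rfl r
  rw [SimpleGraph.connected_iff]
  refine ⟨?_, ⟨⟨cv h t, by simpa using htS⟩⟩⟩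
  rintro ⟨u, hu⟩ ⟨v, hv⟩
  have hu' : u ∉ S := by simpa using hu
  have hv' : v ∉ S := by simpa using hv
  exact (key u hu').trans (key v hv').symm
lemma z_nbr {n : ℕ} (h : 7 ≤ n) {w : Fin n} (ha : (Fg n).Adj ⟨n-1, by omega⟩ w) :
    w.val < 3 := by
  rw [SimpleGraph.fromRel_adj] at ha
  obtain ⟨hne, hrel⟩ := ha
  rcases hrel with (⟨h1,_,_⟩|⟨h1,_,_⟩|⟨_,h3⟩) | (⟨_,h2,_⟩|⟨_,h2,_⟩|⟨hw,_⟩)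
  · simp at h1
  · simp at h1
  · exact h3
  · simp at h2
  · simp at h2
  · exact absurd (Fin.ext hw.symm : (⟨n-1, by omega⟩ : Fin n) = w) hne

lemma mem012 {n : ℕ} (h : 7 ≤ n) {x : Fin n} (hx : x.val < 3) :
    x ∈ ({⟨0, by omega⟩, ⟨1, by omega⟩, ⟨2, by omega⟩} : Finset (Fin n)) := by
  simp only [Finset.mem_insert, Finset.mem_singleton, Fin.ext_iff]
  omega

lemma cut012 {n : ℕ} (h : 7 ≤ n) :
    IsVertexCut (Fg n) ({⟨0 + 0, by omega⟩, ⟨1 + 0, by omega⟩, ⟨2 + 0, by omega⟩} : Finset (Fin n)) := by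
  constructor
  · intro hu
    have h3 : (⟨3, by omega⟩ : Fin n) ∈
        ((({⟨0, by omega⟩, ⟨1, by omega⟩, ⟨2, by omega⟩} : Finset (Fin n))) : Set (Fin n)) :=
      hu ▸ Set.mem_univ _
    simp only [Finset.coe_insert, Finset.coe_singleton, Set.mem_insert_iff,
      Set.mem_singleton_iff, Fin.ext_iff] at h3
    omega
  · intro hcon
    set S : Finset (Fin n) := {⟨0, by omega⟩, ⟨1, by omega⟩, ⟨2, by omega⟩} with hS
    have hz : (⟨n-1, by omega⟩ : Fin n) ∈ ((S : Set (Fin n)))ᶜ := by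
      simp [hS, Fin.ext_iff]; try omega
    have h3 : (⟨3, by omega⟩ : Fin n) ∈ ((S : Set (Fin n)))ᶜ := by
      simp [hS, Fin.ext_iff]; try omega
    obtain ⟨p⟩ := hcon.preconnected ⟨_, hz⟩ ⟨_, h3⟩
    have hne : (⟨(⟨n-1, by omega⟩ : Fin n), hz⟩ : ↥((S : Set (Fin n)))ᶜ) ≠ ⟨⟨3, by omega⟩, h3⟩ := by
      simp [Subtype.ext_iff, Fin.ext_iff]; try omega
    have hnn := SimpleGraph.Walk.not_nil_of_ne (p := p) hne
    have hadj := p.adj_snd hnn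
    have hadj' : (Fg n).Adj ⟨n-1, by omega⟩ (p.getVert 1).val := by simpa using hadj
    have hlt := z_nbr h hadj'
    have := (p.getVert 1).2
    rw [Set.mem_compl_iff] at this
    exact this (mem012 h hlt)
lemma mod_small (a m : ℕ) (hm : 0 < m) (h : a < 2*m) : a % m = a ∨ (m ≤ a ∧ a % m = a - m) := by
  rcases lt_or_ge a m with h'|h'
  · left; exact Nat.mod_eq_of_lt h'
  · right; exact ⟨h', by rw [Nat.mod_eq_sub_mod h', Nat.mod_eq_of_lt (by omega)]⟩

lemma edge_count {n : ℕ} (h : 7 ≤ n) : (Fg n).edgeSet.ncard = 2 * n + 1 := by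
  classical
  set z : Fin n := ⟨n-1, by omega⟩ with hz
  set E1 : Finset (Sym2 (Fin n)) :=
    Finset.image (fun i : Fin (n-1) => s(cv h i.val, cv h (i.val+1))) Finset.univ with hE1
  set E2 : Finset (Sym2 (Fin n)) :=
    Finset.image (fun i : Fin (n-1) => s(cv h i.val, cv h (i.val+2))) Finset.univ with hE2
  set E3 : Finset (Sym2 (Fin n)) :=
    Finset.image (fun t : Fin 3 => s(z, cv h t.val)) Finset.univ with hE3
  have hgen1 : ∀ (a b : Fin n), a.val < n-1 → b.val = (a.val+1) % (n-1) → s(a,b) ∈ E1 := by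
    intro a b ha hb
    have ea : cv h a.val = a := by rw [cv_small h ha]
    have eb : cv h (a.val+1) = b := Fin.ext (by rw [cv_val]; exact hb.symm)
    exact Finset.mem_image.mpr ⟨⟨a.val, ha⟩, Finset.mem_univ _, by rw [ea, eb]⟩
  have hgen2 : ∀ (a b : Fin n), a.val < n-1 → b.val = (a.val+2) % (n-1) → s(a,b) ∈ E2 := by
    intro a b ha hb
    have ea : cv h a.val = a := by rw [cv_small h ha]
    have eb : cv h (a.val+2) = b := Fin.ext (by rw [cv_val]; exact hb.symm)
    exact Finset.mem_image.mpr ⟨⟨a.val, ha⟩, Finset.mem_univ _, by rw [ea, eb]⟩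
  have hgen3 : ∀ (a b : Fin n), a.val = n-1 → b.val < 3 → s(a,b) ∈ E3 := by
    intro a b ha hb
    have ea : z = a := Fin.ext ha.symm
    have eb : cv h b.val = b := by rw [cv_small h (by omega)]
    exact Finset.mem_image.mpr ⟨⟨b.val, hb⟩, Finset.mem_univ _, by rw [ea, eb]⟩
  have hsub1 : (Fg n).edgeSet ⊆ ↑(E1 ∪ E2 ∪ E3) := by
    intro e
    refine Sym2.ind (fun a b hab => ?_) e
    simp only [Finset.coe_union, Set.mem_union, Finset.mem_coe]
    rw [SimpleGraph.mem_edgeSet, SimpleGraph.fromRel_adj] at hab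
    obtain ⟨hne, hrel⟩ := hab
    rcases hrel with (⟨ha,hb,h1⟩|⟨ha,hb,h1⟩|⟨ha,h1⟩) | (⟨ha,hb,h1⟩|⟨ha,hb,h1⟩|⟨ha,h1⟩)
    · exact Or.inl (Or.inl (hgen1 a b ha h1))
    · exact Or.inl (Or.inr (hgen2 a b ha h1))
    · exact Or.inr (hgen3 a b ha h1)
    · rw [Sym2.eq_swap]; exact Or.inl (Or.inl (hgen1 b a ha h1))
    · rw [Sym2.eq_swap]; exact Or.inl (Or.inr (hgen2 b a ha h1))
    · rw [Sym2.eq_swap]; exact Or.inr (hgen3 b a ha h1)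
  have hsub2 : ↑(E1 ∪ E2 ∪ E3) ⊆ (Fg n).edgeSet := by
    intro e he
    simp only [Finset.coe_union, Set.mem_union, Finset.mem_coe, hE1, hE2, hE3,
      Finset.mem_image] at he
    rcases he with (⟨i,_,rfl⟩|⟨i,_,rfl⟩)|⟨t,_,rfl⟩
    · exact (SimpleGraph.mem_edgeSet (Fg n)).mpr (adj_step1 h i.val)
    · exact (SimpleGraph.mem_edgeSet (Fg n)).mpr (adj_step2 h i.val)
    · exact (SimpleGraph.mem_edgeSet (Fg n)).mpr (adj_z h t.isLt)
  have hset : (Fg n).edgeSet = ↑(E1 ∪ E2 ∪ E3) := Set.Subset.antisymm hsub1 hsub2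
  have hc1 : E1.card = n-1 := by
    rw [hE1, Finset.card_image_of_injective _ ?_, Finset.card_univ, Fintype.card_fin]
    intro i j e
    rw [Sym2.eq_iff] at e
    have hi := i.isLt; have hj := j.isLt
    apply Fin.ext
    rcases e with ⟨e1,e2⟩|⟨e1,e2⟩
    · have := (cv_eq_iff h).mp e1
      rwa [Nat.ModEq, Nat.mod_eq_of_lt hi, Nat.mod_eq_of_lt hj] at this
    · exfalso
      have q1 := (cv_eq_iff h).mp e1
      have q2 := (cv_eq_iff h).mp e2
      rw [Nat.ModEq, Nat.mod_eq_of_lt hi] at q1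
      rw [Nat.ModEq, Nat.mod_eq_of_lt hj] at q2
      have a1 := mod_small (j.val+1) (n-1) (by omega) (by omega)
      have a2 := mod_small (i.val+1) (n-1) (by omega) (by omega)
      omega
  have hc2 : E2.card = n-1 := by
    rw [hE2, Finset.card_image_of_injective _ ?_, Finset.card_univ, Fintype.card_fin]
    intro i j e
    rw [Sym2.eq_iff] at e
    have hi := i.isLt; have hj := j.isLt
    apply Fin.ext
    rcases e with ⟨e1,e2⟩|⟨e1,e2⟩
    · have := (cv_eq_iff h).mp e1
      rwa [Nat.ModEq, Nat.mod_eq_of_lt hi, Nat.mod_eq_of_lt hj] at this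
    · exfalso
      have q1 := (cv_eq_iff h).mp e1
      have q2 := (cv_eq_iff h).mp e2
      rw [Nat.ModEq, Nat.mod_eq_of_lt hi] at q1
      rw [Nat.ModEq, Nat.mod_eq_of_lt hj] at q2
      have a1 := mod_small (j.val+2) (n-1) (by omega) (by omega)
      have a2 := mod_small (i.val+2) (n-1) (by omega) (by omega)
      omega
  have hzcv : ∀ x : ℕ, z ≠ cv h x := by
    intro x e
    have h1 : (n-1 : ℕ) = x % (n-1) := by
      have := congrArg Fin.val e
      rwa [cv_val] at this
    have h2 : x % (n-1) < n - 1 := Nat.mod_lt _ (by omega)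
    omega
  have hc3 : E3.card = 3 := by
    rw [hE3, Finset.card_image_of_injective _ ?_, Finset.card_univ, Fintype.card_fin]
    intro t t' e
    rw [Sym2.eq_iff] at e
    rcases e with ⟨e1,e2⟩|⟨e1,e2⟩
    · have := (cv_eq_iff h).mp e2
      rw [Nat.ModEq, Nat.mod_eq_of_lt (by omega), Nat.mod_eq_of_lt (by omega)] at this
      exact Fin.ext this
    · exact absurd e1 (hzcv _)
  have hd12 : Disjoint E1 E2 := by
    rw [Finset.disjoint_left]
    rintro e he1 he2
    simp only [hE1, hE2, Finset.mem_image] at he1 he2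
    obtain ⟨i, -, rfl⟩ := he1
    obtain ⟨j, -, ej⟩ := he2
    rw [Sym2.eq_iff] at ej
    have hi := i.isLt; have hj := j.isLt
    have a1 := mod_small (i.val+1) (n-1) (by omega) (by omega)
    have a2 := mod_small (i.val+2) (n-1) (by omega) (by omega)
    have a3 := mod_small (j.val+1) (n-1) (by omega) (by omega)
    have a4 := mod_small (j.val+2) (n-1) (by omega) (by omega)
    rcases ej with ⟨e1,e2⟩|⟨e1,e2⟩ <;>
    · have q1 := (cv_eq_iff h).mp e1
      have q2 := (cv_eq_iff h).mp e2
      rw [Nat.ModEq] at q1 q2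
      rw [Nat.mod_eq_of_lt hi] at *
      rw [Nat.mod_eq_of_lt hj] at *
      omega
  have hd3 : Disjoint (E1 ∪ E2) E3 := by
    rw [Finset.disjoint_left]
    rintro e he1 he3
    simp only [hE1, hE2, Finset.mem_union, Finset.mem_image] at he1
    simp only [hE3, Finset.mem_image] at he3
    obtain ⟨t, -, rfl⟩ := he3
    rcases he1 with ⟨i,-,ei⟩|⟨i,-,ei⟩ <;>
    · rw [Sym2.eq_iff] at ei
      rcases ei with ⟨e1,e2⟩|⟨e1,e2⟩
      · exact hzcv _ e1.symm
      · exact hzcv _ e2.symm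
  rw [hset, Set.ncard_coe_finset, Finset.card_union_of_disjoint hd3,
    Finset.card_union_of_disjoint hd12, hc1, hc2, hc3]
  omega
lemma adj_small {n : ℕ} (h : 7 ≤ n) {i j : ℕ} (hi : i < n-1) (hj : j < n-1)
    (hij : j = i + 1 ∨ j = i + 2) : (Fg n).Adj ⟨i, by omega⟩ ⟨j, by omega⟩ := by
  rcases hij with rfl|rfl
  · have := adj_step1 h i
    rwa [cv_small h hi, cv_small h (by omega)] at this
  · have := adj_step2 h i
    rwa [cv_small h hi, cv_small h (by omega)] at this

lemma not_acyclic {n : ℕ} (h : 7 ≤ n) :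
    ¬ ((Fg n).induce ((({⟨0 + 0, by omega⟩, ⟨1 + 0, by omega⟩, ⟨2 + 0, by omega⟩} : Finset (Fin n))) :
        Set (Fin n))).IsAcyclic := by
  intro hac
  set s : Set (Fin n) :=
    ((({⟨0, by omega⟩, ⟨1, by omega⟩, ⟨2, by omega⟩} : Finset (Fin n))) : Set (Fin n)) with hs
  have ha : (⟨0, by omega⟩ : Fin n) ∈ s := by simp [hs]
  have hb : (⟨1, by omega⟩ : Fin n) ∈ s := by simp [hs]
  have hc : (⟨2, by omega⟩ : Fin n) ∈ s := by simp [hs]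
  set H := (Fg n).induce s with hH
  have hab : H.Adj ⟨_, ha⟩ ⟨_, hb⟩ := by
    exact adj_small h (i := 0) (j := 1) (by omega) (by omega) (Or.inl rfl)
  have hbc : H.Adj ⟨_, hb⟩ ⟨_, hc⟩ := by
    exact adj_small h (i := 1) (j := 2) (by omega) (by omega) (Or.inl rfl)
  have hac' : H.Adj ⟨_, ha⟩ ⟨_, hc⟩ := by
    exact adj_small h (i := 0) (j := 2) (by omega) (by omega) (Or.inr rfl)
  have hca : H.Adj ⟨_, hc⟩ ⟨_, ha⟩ := hac'.symm
  have hcyc : (SimpleGraph.Walk.cons hab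
      (SimpleGraph.Walk.cons hbc (SimpleGraph.Walk.cons hca SimpleGraph.Walk.nil))).IsCycle := by
    rw [SimpleGraph.Walk.cons_isCycle_iff]
    refine ⟨?_, ?_⟩
    · rw [SimpleGraph.Walk.cons_isPath_iff]
      refine ⟨?_, ?_⟩
      · rw [SimpleGraph.Walk.cons_isPath_iff]
        refine ⟨SimpleGraph.Walk.IsPath.nil, ?_⟩
        simp [Subtype.ext_iff, Fin.ext_iff]
      · simp [Subtype.ext_iff, Fin.ext_iff]
    · simp [Sym2.eq_iff, Subtype.ext_iff, Fin.ext_iff]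
  exact hac _ hcyc

/-- The graph `F_n` (a cycle `v_1 ⋯ v_{n-1} v_1` with all 2-chords added, plus
a new vertex `v_n` joined to `v_1, v_2, v_3`; here `v_i` is the vertex
`i - 1 : Fin n`) is connected, has order `n` and size `2n + 1`, has
connectivity 3, its unique minimum vertex cut is `{v_1, v_2, v_3}`, which
induces a triangle, and it has no foresty minimum vertex cut. -/
theorem F_n_no_foresty_minimum_vertex_cut
    (n : ℕ) (h7 : 7 ≤ n) (F : SimpleGraph (Fin n))
    (hF : F = SimpleGraph.fromRel (fun a b =>
        (a.val < n - 1 ∧ b.val < n - 1 ∧ b.val = (a.val + 1) % (n - 1)) ∨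
        (a.val < n - 1 ∧ b.val < n - 1 ∧ b.val = (a.val + 2) % (n - 1)) ∨
        (a.val = n - 1 ∧ b.val < 3))) :
    F.Connected ∧ Fintype.card (Fin n) = n ∧ F.edgeSet.ncard = 2 * n + 1 ∧
    graphConnectivity F = 3 ∧
    (∀ S : Finset (Fin n), IsVertexCut F S → S.card = graphConnectivity F →
      S = {⟨0, by omega⟩, ⟨1, by omega⟩, ⟨2, by omega⟩}) ∧
    F.Adj ⟨0, by omega⟩ ⟨1, by omega⟩ ∧
    F.Adj ⟨1, by omega⟩ ⟨2, by omega⟩ ∧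
    F.Adj ⟨0, by omega⟩ ⟨2, by omega⟩ ∧
    ¬ ∃ S : Finset (Fin n), IsVertexCut F S ∧ S.card = graphConnectivity F ∧
      (F.induce (S : Set (Fin n))).IsAcyclic := by
  subst hF
  have hcard012 : ({⟨0, by omega⟩, ⟨1, by omega⟩, ⟨2, by omega⟩} : Finset (Fin n)).card = 3 := by
    rw [Finset.card_insert_of_notMem (by simp [Fin.ext_iff]),
      Finset.card_insert_of_notMem (by simp [Fin.ext_iff]), Finset.card_singleton]
  have hconn : (Fg n).Connected := by
    have h0 := connect h7 ∅ (by simp)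
      (fun hsub => by simpa using hsub (Finset.mem_insert_self _ _))
    rw [show ((↑(∅ : Finset (Fin n)) : Set (Fin n))ᶜ) = Set.univ by simp] at h0
    exact (SimpleGraph.induceUnivIso (Fg n)).connected_iff.mp h0
  have hmem3 : 3 ∈ {k | ∃ S : Finset (Fin n), IsVertexCut (Fg n) S ∧ S.card = k} :=
    ⟨_, cut012 h7, hcard012⟩
  have hlb : ∀ k ∈ {k | ∃ S : Finset (Fin n), IsVertexCut (Fg n) S ∧ S.card = k}, 3 ≤ k := by
    rintro k ⟨S, hcut, rfl⟩
    by_contra hk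
    push_neg at hk
    have hns : ¬ (({⟨0, by omega⟩, ⟨1, by omega⟩, ⟨2, by omega⟩} : Finset (Fin n)) ⊆ S) :=
      fun hsub => by have := Finset.card_le_card hsub; omega
    exact hcut.2 (connect h7 S (by omega) hns)
  have hκ : graphConnectivity (Fg n) = 3 :=
    le_antisymm (Nat.sInf_le hmem3) (hlb _ (Nat.sInf_mem ⟨3, hmem3⟩))
  have huniq : ∀ S : Finset (Fin n), IsVertexCut (Fg n) S → S.card = graphConnectivity (Fg n) →
      S = ({⟨0, by omega⟩, ⟨1, by omega⟩, ⟨2, by omega⟩} : Finset (Fin n)) := by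
    intro S hcut hcard
    rw [hκ] at hcard
    have hsub : ({⟨0, by omega⟩, ⟨1, by omega⟩, ⟨2, by omega⟩} : Finset (Fin n)) ⊆ S := by
      by_contra hns
      exact hcut.2 (connect h7 S (by omega) hns)
    exact (Finset.eq_of_subset_of_card_le hsub (by omega)).symm
  refine ⟨hconn, Fintype.card_fin n, edge_count h7, hκ, huniq, ?_, ?_, ?_, ?_⟩
  · exact adj_small h7 (i := 0) (j := 1) (by omega) (by omega) (Or.inl rfl)
  · exact adj_small h7 (i := 1) (j := 2) (by omega) (by omega) (Or.inl rfl)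
  · exact adj_small h7 (i := 0) (j := 2) (by omega) (by omega) (Or.inr rfl)
  · rintro ⟨S, hcut, hcard, hacyc⟩
    rw [huniq S hcut hcard] at hacyc
    exact not_acyclic h7 hacyc
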